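/- Let (u_n) be a non-increasing sequence of positive real numbers converging to 0. Let α > 1 and C > 0, and suppose that for all sufficiently large n one has u_n − u_{n+1} ≤ C·u_n^α. Then liminf_{n→∞} n^{1/(α−1)}·u_n ≥ (C(α−1))^{−1/(α−1)}. -/

import Mathlib

open Filter

theorem stmt_0 (u : ℕ → ℝ) (hpos : ∀ n, 0 < u n)
    (hmono : ∀ n, u (n + 1) ≤ u n)
    (hlim : Tendsto u atTop (nhds 0))
    (α C : ℝ) (hα : 1 < α) (hC : 0 < C)
    (hrec : ∀ᶠ n in atTop, u n - u (n + 1) ≤ C * u n ^ α) :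
    (((C * (α - 1)) ^ (-(1 / (α - 1))) : ℝ) : EReal) ≤
      liminf (fun n : ℕ => (((n : ℝ) ^ (1 / (α - 1)) * u n : ℝ) : EReal)) atTop := by
  have hα1 : 0 < α - 1 := by linarith
  set β : ℝ := 1 / (α - 1) with hβ
  have hβpos : 0 < β := by positivity
  rw [Filter.le_liminf_iff]
  intro b hb
  obtain ⟨r, hbr, hrT⟩ := EReal.lt_iff_exists_real_btwn.mp hb
  rw [EReal.coe_lt_coe_iff] at hrT
  have hCA : 0 < C * (α - 1) := by positivity
  -- choose K > C(α-1) with r < K^(-β)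
  have hcont : ContinuousAt (fun x : ℝ => x ^ (-β)) (C * (α - 1)) :=
    Real.continuousAt_rpow_const _ _ (Or.inl hCA.ne')
  have hev : ∀ᶠ x in nhdsWithin (C * (α - 1)) (Set.Ioi (C * (α - 1))),
      r < x ^ (-β) ∧ x ∈ Set.Ioi (C * (α - 1)) :=
    (((hcont.tendsto.mono_left nhdsWithin_le_nhds).eventually_const_lt hrT).and
      self_mem_nhdsWithin)
  obtain ⟨K, hrK, hKgt⟩ := hev.exists
  have hKpos : 0 < K := lt_trans hCA hKgt
  set c : ℝ := -(α - 1) with hc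
  -- derivative fact
  have hg : HasDerivAt (fun t : ℝ => (1 - t) ^ c) (α - 1) 0 := by
    have h1 : HasDerivAt (fun t : ℝ => 1 - t) (-1) 0 := by
      simpa using (hasDerivAt_id (0 : ℝ)).const_sub 1
    have h2 := h1.rpow_const (p := c) (by left; norm_num)
    have : -1 * c * (1 - (0 : ℝ)) ^ (c - 1) = α - 1 := by
      norm_num [Real.one_rpow, hc]
    rwa [this] at h2
  have hslope := hasDerivAt_iff_tendsto_slope.mp hg
  set t : ℕ → ℝ := fun n => C * u n ^ (α - 1) with ht
  have htpos : ∀ n, 0 < t n := fun n => by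
    have := Real.rpow_pos_of_pos (hpos n) (α - 1); positivity
  have ht0 : Tendsto t atTop (nhds 0) := by
    have h1 : Tendsto (fun n => u n ^ (α - 1)) atTop (nhds 0) := by
      have := (Real.continuousAt_rpow_const 0 (α - 1) (Or.inr hα1.le)).tendsto.comp hlim
      simpa [Function.comp_def, Real.zero_rpow hα1.ne'] using this
    simpa using h1.const_mul C
  have htne : Tendsto t atTop (nhdsWithin 0 {(0 : ℝ)}ᶜ) :=
    tendsto_nhdsWithin_of_tendsto_nhds_of_eventually_within _ ht0
      (Eventually.of_forall fun n => (htpos n).ne')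
  have hφ : Tendsto (fun n => slope (fun s : ℝ => (1 - s) ^ c) 0 (t n)) atTop (nhds (α - 1)) :=
    hslope.comp htne
  have hKC : α - 1 < K / C := (lt_div_iff₀' hC).mpr hKgt
  have e1 : ∀ᶠ n in atTop, slope (fun s : ℝ => (1 - s) ^ c) 0 (t n) < K / C :=
    hφ.eventually_lt_const hKC
  have e2 : ∀ᶠ n in atTop, t n < 1 := ht0.eventually_lt_const one_pos
  -- key step: v(n+1) ≤ v n + K eventually
  have key : ∀ᶠ n in atTop, u (n + 1) ^ c ≤ u n ^ c + K := by
    filter_upwards [e1, e2, hrec] with n h1 h2 h3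
    have htn := htpos n
    have huα : C * u n ^ α = t n * u n := by
      rw [ht, show α = (α - 1) + 1 by ring, Real.rpow_add_one (hpos n).ne']
      ring
    have hlow : u n * (1 - t n) ≤ u (n + 1) := by nlinarith [h3, huα]
    have hposlow : 0 < u n * (1 - t n) := mul_pos (hpos n) (by linarith)
    have step1 : u (n + 1) ^ c ≤ (u n * (1 - t n)) ^ c :=
      Real.rpow_le_rpow_of_nonpos hposlow hlow (by rw [hc]; linarith)
    have step2 : (u n * (1 - t n)) ^ c = u n ^ c * (1 - t n) ^ c :=
      Real.mul_rpow (hpos n).le (by linarith)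
    have hinv : u n ^ c * t n = C := by
      have h' : u n ^ c * (C * u n ^ (α - 1)) = C := by
        rw [hc, mul_comm C _, ← mul_assoc, ← Real.rpow_add (hpos n)]
        norm_num
      simpa [ht] using h'
    have hsl : slope (fun s : ℝ => (1 - s) ^ c) 0 (t n) = ((1 - t n) ^ c - 1) / t n := by
      rw [slope_def_field]
      norm_num [Real.one_rpow]
    rw [hsl] at h1
    have h1' : ((1 - t n) ^ c - 1) / t n * C < K := by
      rw [div_lt_div_iff₀ htn hC] at h1
      rw [div_mul_eq_mul_div, div_lt_iff₀ htn]
      linarith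
    have hexp : u n ^ c * ((1 - t n) ^ c - 1) = ((1 - t n) ^ c - 1) / t n * C := by
      rw [← hinv]; field_simp
    calc u (n + 1) ^ c ≤ u n ^ c * (1 - t n) ^ c := by rw [← step2]; exact step1
      _ = u n ^ c + u n ^ c * ((1 - t n) ^ c - 1) := by ring
      _ ≤ u n ^ c + K := by rw [hexp]; linarith [h1']
  obtain ⟨N, hN⟩ := eventually_atTop.mp key
  set A : ℝ := u N ^ c with hA
  have hApos : 0 < A := Real.rpow_pos_of_pos (hpos N) c
  have hts : ∀ k : ℕ, u (N + k) ^ c ≤ A + k * K := by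
    intro k
    induction k with
    | zero => simp [hA]
    | succ m ih =>
      have h := hN (N + m) (Nat.le_add_right _ _)
      push_cast
      calc u (N + (m + 1)) ^ c = u ((N + m) + 1) ^ c := rfl
        _ ≤ u (N + m) ^ c + K := h
        _ ≤ A + m * K + K := by linarith
        _ = A + (m + 1) * K := by ring
  have hub : ∀ n, N ≤ n → u n ^ c ≤ A + n * K := by
    intro n hn
    obtain ⟨k, rfl⟩ := Nat.exists_eq_add_of_le hn
    calc u (N + k) ^ c ≤ A + k * K := hts k
      _ ≤ A + (N + k : ℕ) * K := by
          have : (k : ℝ) ≤ ((N + k : ℕ) : ℝ) := by push_cast; linarith [Nat.cast_nonneg (α := ℝ) N]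
          nlinarith [hKpos]
  -- lower bound eventually
  have glower : ∀ᶠ n : ℕ in atTop, ((n : ℝ) / (A + n * K)) ^ β ≤ (n : ℝ) ^ β * u n := by
    filter_upwards [eventually_ge_atTop N] with n hn
    have hvpos : 0 < u n ^ c := Real.rpow_pos_of_pos (hpos n) c
    have hubn := hub n hn
    have hApn : 0 < A + n * K := lt_of_lt_of_le hvpos hubn
    have huinv : u n = (u n ^ c) ^ (-β) := by
      rw [← Real.rpow_mul (hpos n).le]
      have hce : c * (-β) = 1 := by rw [hc, hβ]; field_simp
      rw [hce, Real.rpow_one]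
    have hun : (A + n * K) ^ (-β) ≤ u n := by
      rw [huinv]
      exact Real.rpow_le_rpow_of_nonpos hvpos hubn (by linarith)
    have hdiv : ((n : ℝ) / (A + n * K)) ^ β = (n : ℝ) ^ β * (A + n * K) ^ (-β) := by
      rw [Real.div_rpow (Nat.cast_nonneg n) hApn.le, Real.rpow_neg hApn.le, div_eq_mul_inv]
    rw [hdiv]
    exact mul_le_mul_of_nonneg_left hun (Real.rpow_nonneg (Nat.cast_nonneg n) β)
  -- limit of the lower bound
  have hquot : Tendsto (fun n : ℕ => (n : ℝ) / (A + n * K)) atTop (nhds (1 / K)) := by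
    have h1 : Tendsto (fun n : ℕ => A / n + K) atTop (nhds (0 + K)) :=
      (tendsto_const_div_atTop_nhds_zero_nat A).add tendsto_const_nhds
    rw [zero_add] at h1
    have h2 : Tendsto (fun n : ℕ => 1 / (A / n + K)) atTop (nhds (1 / K)) :=
      tendsto_const_nhds.div h1 hKpos.ne'
    apply h2.congr'
    filter_upwards [eventually_ge_atTop 1] with n hn
    have hnpos : (0 : ℝ) < (n : ℝ) := by exact_mod_cast hn
    have hApn : (0 : ℝ) < A + (n : ℝ) * K := by positivity
    have h3 : (0 : ℝ) < A / (n : ℝ) + K := by positivity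
    show 1 / (A / (n : ℝ) + K) = (n : ℝ) / (A + (n : ℝ) * K)
    rw [div_eq_div_iff h3.ne' hApn.ne']
    field_simp
  have hglim : Tendsto (fun n : ℕ => ((n : ℝ) / (A + n * K)) ^ β) atTop (nhds (K ^ (-β))) := by
    have hc2 : ContinuousAt (fun x : ℝ => x ^ β) (1 / K) :=
      Real.continuousAt_rpow_const _ _ (Or.inl (by positivity))
    have := hc2.tendsto.comp hquot
    have heq : (1 / K) ^ β = K ^ (-β) := by
      rw [one_div, Real.inv_rpow hKpos.le, Real.rpow_neg hKpos.le]
    rwa [heq] at this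
  have hrg : ∀ᶠ n : ℕ in atTop, r < ((n : ℝ) / (A + n * K)) ^ β := hglim.eventually_const_lt hrK
  filter_upwards [glower, hrg] with n h1 h2
  calc b < (r : EReal) := hbr
    _ < (((n : ℝ) ^ β * u n : ℝ) : EReal) := by
        rw [EReal.coe_lt_coe_iff]; linarith
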